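/- There exists a constant C > 0 such that for all real x ≥ 1, the L²(0,1)-norm of B_x satisfies ‖B_x‖₂ ≥ C/√x, where B_x(t) = (1/x)·Σ_{k ≤ x} β(kt). -/

import Mathlib

noncomputable def beta (t : ℝ) : ℝ := t - ⌊t⌋ - 1/2

noncomputable def B (x : ℝ) (t : ℝ) : ℝ :=
  (1/x) * ∑ k ∈ Finset.Icc 1 ⌊x⌋₊, beta (k * t)

lemma beta_eq (t : ℝ) : beta t = Int.fract t - 1/2 := by
  rw [beta, Int.fract]

lemma abs_beta_le (t : ℝ) : |beta t| ≤ 1/2 := by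
  rw [beta_eq, abs_le]
  have h1 := Int.fract_nonneg t
  have h2 := Int.fract_lt_one t
  constructor <;> linarith

lemma measurable_beta : Measurable beta := by
  have : beta = fun t => Int.fract t - 1/2 := funext beta_eq
  rw [this]
  exact measurable_fract.sub measurable_const

lemma measurable_B (x : ℝ) : Measurable (B x) := by
  unfold B
  exact measurable_const.mul (Finset.measurable_sum _ fun k _ =>
    measurable_beta.comp (measurable_const.mul measurable_id))

lemma intervalIntegrable_B_sq (x : ℝ) (hx : 1 ≤ x) (a b : ℝ) :
    IntervalIntegrable (fun t => (B x t)^2) MeasureTheory.volume a b := by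
  rw [intervalIntegrable_iff]
  apply MeasureTheory.Measure.integrableOn_of_bounded (M := 1/4)
  · exact measure_Ioc_lt_top.ne
  · exact (((measurable_B x).pow measurable_const).aestronglyMeasurable)
  · apply MeasureTheory.ae_of_all
    intro t
    have hb : |B x t| ≤ 1/2 := by
      unfold B
      rw [abs_mul]
      have hsum : |∑ k ∈ Finset.Icc 1 ⌊x⌋₊, beta (k * t)| ≤ (⌊x⌋₊ : ℝ) * (1/2) := by
        calc |∑ k ∈ Finset.Icc 1 ⌊x⌋₊, beta (k * t)|
            ≤ ∑ k ∈ Finset.Icc 1 ⌊x⌋₊, |beta (k * t)| := Finset.abs_sum_le_sum_abs _ _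
          _ ≤ ∑ k ∈ Finset.Icc 1 ⌊x⌋₊, (1/2 : ℝ) :=
              Finset.sum_le_sum fun k _ => abs_beta_le _
          _ ≤ (⌊x⌋₊ : ℝ) * (1/2) := by
              rw [Finset.sum_const, Nat.card_Icc]
              simp [nsmul_eq_mul]
      have hx0 : (0:ℝ) < x := by linarith
      have hfl : (⌊x⌋₊ : ℝ) ≤ x := Nat.floor_le hx0.le
      calc |1/x| * |∑ k ∈ Finset.Icc 1 ⌊x⌋₊, beta (k * t)|
          ≤ |1/x| * ((⌊x⌋₊ : ℝ) * (1/2)) := by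
            exact mul_le_mul_of_nonneg_left hsum (abs_nonneg _)
        _ ≤ (1/x) * (x * (1/2)) := by
            rw [abs_of_pos (by positivity)]
            gcongr
        _ = 1/2 := by field_simp
    have : ‖(B x t)^2‖ = |B x t|^2 := by
      rw [Real.norm_eq_abs, abs_of_nonneg (sq_nonneg _), sq_abs]
    rw [this]
    nlinarith [abs_nonneg (B x t)]

lemma B_le (x : ℝ) (hx : 1 ≤ x) (t : ℝ) (ht0 : 0 ≤ t) (ht1 : t ≤ 1/(4*x)) :
    B x t ≤ -(1/8) := by
  have hx0 : (0:ℝ) < x := by linarith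
  set N := ⌊x⌋₊ with hN
  have hN1 : 1 ≤ N := Nat.one_le_floor_iff x |>.mpr (by exact_mod_cast hx)
  have hNx : (N : ℝ) ≤ x := Nat.floor_le hx0.le
  have hxN : x < N + 1 := Nat.lt_floor_add_one x
  -- each term ≤ -1/4
  have hterm : ∀ k ∈ Finset.Icc 1 N, beta (k * t) ≤ -(1/4) := by
    intro k hk
    rw [Finset.mem_Icc] at hk
    have hk1 : (1:ℝ) ≤ k := by exact_mod_cast hk.1
    have hkN : (k:ℝ) ≤ N := by exact_mod_cast hk.2
    have hkt0 : 0 ≤ (k:ℝ) * t := by positivity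
    have hkt : (k:ℝ) * t ≤ 1/4 := by
      calc (k:ℝ) * t ≤ x * (1/(4*x)) := by
            apply mul_le_mul (by linarith) ht1 ht0 hx0.le
        _ = 1/4 := by field_simp
    have hfloor : ⌊(k:ℝ) * t⌋ = 0 := Int.floor_eq_zero_iff.mpr ⟨hkt0, by linarith⟩
    rw [beta, hfloor]
    push_cast
    linarith
  have hsum : ∑ k ∈ Finset.Icc 1 N, beta (k * t) ≤ -(N/4 : ℝ) := by
    calc ∑ k ∈ Finset.Icc 1 N, beta (k * t)
        ≤ ∑ k ∈ Finset.Icc 1 N, (-(1/4) : ℝ) := Finset.sum_le_sum hterm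
      _ = -(N/4 : ℝ) := by
          rw [Finset.sum_const, Nat.card_Icc]
          simp [nsmul_eq_mul]
          ring
  have hN2 : x/2 ≤ (N : ℝ) := by
    have : (1:ℝ) ≤ N := by exact_mod_cast hN1
    linarith
  unfold B
  rw [← hN]
  have h1 : (1/x) * ∑ k ∈ Finset.Icc 1 N, beta (k * t) ≤ (1/x) * (-(N/4:ℝ)) := by
    apply mul_le_mul_of_nonneg_left hsum (by positivity)
  calc (1/x) * ∑ k ∈ Finset.Icc 1 N, beta (k * t)
      ≤ (1/x) * (-(N/4:ℝ)) := h1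
    _ ≤ (1/x) * (-(x/8)) := by
        apply mul_le_mul_of_nonneg_left _ (by positivity)
        linarith
    _ = -(1/8) := by field_simp

theorem stmt_1 :
    ∃ C : ℝ, 0 < C ∧ ∀ x : ℝ, 1 ≤ x →
      C / Real.sqrt x ≤ (∫ t in (0:ℝ)..1, (B x t)^2) ^ ((1:ℝ)/2) := by
  refine ⟨1/16, by norm_num, fun x hx => ?_⟩
  have hx0 : (0:ℝ) < x := by linarith
  set a : ℝ := 1/(4*x) with ha
  have ha0 : 0 < a := by positivity
  have ha1 : a ≤ 1 := by
    rw [ha, div_le_one (by positivity)]; linarith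
  have hint1 := intervalIntegrable_B_sq x hx 0 a
  have hint2 := intervalIntegrable_B_sq x hx a 1
  have hsplit : (∫ t in (0:ℝ)..1, (B x t)^2)
      = (∫ t in (0:ℝ)..a, (B x t)^2) + (∫ t in a..(1:ℝ), (B x t)^2) :=
    (intervalIntegral.integral_add_adjacent_intervals hint1 hint2).symm
  have h2 : 0 ≤ ∫ t in a..(1:ℝ), (B x t)^2 :=
    intervalIntegral.integral_nonneg ha1 (fun t _ => sq_nonneg _)
  have h1 : a * (1/64) ≤ ∫ t in (0:ℝ)..a, (B x t)^2 := by
    have : ∫ t in (0:ℝ)..a, (1/64 : ℝ) ≤ ∫ t in (0:ℝ)..a, (B x t)^2 := by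
      apply intervalIntegral.integral_mono_on ha0.le intervalIntegrable_const hint1
      intro t ht
      have hb := B_le x hx t ht.1 (by rw [← ha]; exact ht.2)
      nlinarith
    rwa [intervalIntegral.integral_const, smul_eq_mul, sub_zero] at this
  have hI : 1/(256*x) ≤ ∫ t in (0:ℝ)..1, (B x t)^2 := by
    rw [hsplit]
    have : a * (1/64) = 1/(256*x) := by rw [ha]; field_simp; ring
    linarith
  have hInn : (0:ℝ) ≤ ∫ t in (0:ℝ)..1, (B x t)^2 := le_trans (by positivity) hI
  have hsq : ((1/16) / Real.sqrt x)^2 = 1/(256*x) := by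
    rw [div_pow, Real.sq_sqrt hx0.le]
    ring
  have hC0 : 0 ≤ (1/16 : ℝ) / Real.sqrt x := by positivity
  rw [show ((1:ℝ)/2) = (2:ℝ)⁻¹ by norm_num]
  have key : (1/(256*x) : ℝ) ^ ((2:ℝ)⁻¹) = (1/16 : ℝ) / Real.sqrt x := by
    rw [← hsq, ← Real.rpow_natCast ((1/16 : ℝ) / Real.sqrt x) 2,
      ← Real.rpow_mul hC0]
    norm_num
  rw [← key]
  exact Real.rpow_le_rpow (by positivity) hI (by norm_num)
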